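/- Let P be a row-finite matrix over a commutative ring, let O(P) be its output matrix (O(P)_{nk} = (P^n)_{0k}), and let a_n = (P^n)_{00}. Then the infinite Hankel matrix H = (a_{i+j})_{i,j≥0} factorizes as H = O(P)·O(Pᵀ)ᵀ. Consequently, if P is totally positive of order r over a partially ordered commutative ring, then H is totally positive of order r. -/

import Mathlib

/-- A matrix is row-finite if each of its rows has finitely many nonzero entries. -/
def RowFinite {R : Type*} [Zero R] (P : ℕ → ℕ → R) : Prop :=
  ∀ i : ℕ, {j : ℕ | P i j ≠ 0}.Finite

/-- The output matrix of a production matrix `P`: `𝒪(P)_{nk} = (P^n)_{0k}`. -/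
noncomputable def outputMatrix {R : Type*} [CommRing R] (P : ℕ → ℕ → R) : ℕ → ℕ → R
  | 0, k => if k = 0 then 1 else 0
  | n + 1, k => ∑ᶠ j : ℕ, outputMatrix P n j * P j k

/-- The minor of an infinite matrix `M : ℕ → ℕ → R` with rows `f 0 < f 1 < ⋯`
and columns `g 0 < g 1 < ⋯` (for strictly monotone `f, g`). -/
noncomputable def submatrixDet {R : Type*} [CommRing R] (M : ℕ → ℕ → R) {k : ℕ}
    (f g : Fin k → ℕ) : R :=
  Matrix.det (Matrix.of fun i j => M (f i) (g j))

open Finset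

section Aux
variable {R : Type*} [CommRing R]


open Finset



theorem cauchyBinet {k : ℕ} (s : Finset ℕ) (A : Fin k → ℕ → R) (B : ℕ → Fin k → R) :
    Matrix.det (Matrix.of fun i j => ∑ x ∈ s, A i x * B x j)
      = ∑ ψ ∈ (Fintype.piFinset fun _ : Fin k => s).filter (fun ψ => StrictMono ψ),
          Matrix.det (Matrix.of fun i j => A i (ψ j))
            * Matrix.det (Matrix.of fun i j => B (ψ i) j) := by
  classical
  have h1 : Matrix.det (Matrix.of fun i j => ∑ x ∈ s, A i x * B x j)
      = ∑ r ∈ Fintype.piFinset (fun _ : Fin k => s),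
          (∏ i, A i (r i)) * Matrix.det (Matrix.of fun i j => B (r i) j) := by
    have hrow : (Matrix.of fun i j => ∑ x ∈ s, A i x * B x j)
        = fun i => ∑ x ∈ s, (fun j => A i x * B x j) := by
      funext i j
      simp [Finset.sum_apply]
    show Matrix.detRowAlternating (Matrix.of fun i j => ∑ x ∈ s, A i x * B x j) = _
    rw [hrow]
    erw [(Matrix.detRowAlternating :
        (Fin k → R) [⋀^Fin k]→ₗ[R] R).toMultilinearMap.map_sum_finset
      (g := fun i x => fun j => A i x * B x j) (A := fun _ : Fin k => s)]
    refine Finset.sum_congr rfl fun r _ => ?_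
    have : (fun i => (fun j => A i (r i) * B (r i) j))
        = fun i => A i (r i) • (fun j => B (r i) j) := by
      funext i j; simp [smul_eq_mul]
    rw [this]
    erw [(Matrix.detRowAlternating :
        (Fin k → R) [⋀^Fin k]→ₗ[R] R).toMultilinearMap.map_smul_univ]
    simp [smul_eq_mul, Matrix.det]
    rfl
  rw [h1]
  have hz : ∀ r ∈ Fintype.piFinset (fun _ : Fin k => s),
      (∏ i, A i (r i)) * Matrix.det (Matrix.of fun i j => B (r i) j) ≠ 0 →
      Function.Injective r := by
    intro r _ hne
    by_contra hni
    apply hne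
    simp only [Function.Injective, not_forall] at hni
    obtain ⟨a, b, hab, hne'⟩ := hni
    have : Matrix.det (Matrix.of fun i j => B (r i) j) = 0 := by
      apply Matrix.det_zero_of_row_eq hne'
      funext j'
      simp [hab]
    rw [this, mul_zero]
  rw [← Finset.sum_filter_of_ne hz]
  have h2 : ∑ r ∈ (Fintype.piFinset fun _ : Fin k => s).filter
        (fun r => Function.Injective r),
      (∏ i, A i (r i)) * Matrix.det (Matrix.of fun i j => B (r i) j)
    = ∑ p ∈ ((Fintype.piFinset fun _ : Fin k => s).filter (fun ψ => StrictMono ψ)) ×ˢ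
        (Finset.univ : Finset (Equiv.Perm (Fin k))),
      (∏ i, A i (p.1 (p.2 i)))
        * Matrix.det (Matrix.of fun i j => B (p.1 (p.2 i)) j) := by
    refine Finset.sum_nbij' (fun r => (r ∘ Tuple.sort r, (Tuple.sort r)⁻¹))
      (fun p => p.1 ∘ p.2) ?_ ?_ ?_ ?_ ?_
    · intro r hr
      rw [Finset.mem_filter, Fintype.mem_piFinset] at hr
      obtain ⟨hmem, hinj⟩ := hr
      rw [Finset.mem_product, Finset.mem_filter, Fintype.mem_piFinset]
      refine ⟨⟨fun i => hmem _, ?_⟩, Finset.mem_univ _⟩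
      exact (Tuple.monotone_sort r).strictMono_of_injective
        (hinj.comp (Tuple.sort r).injective)
    · intro p hp
      rw [Finset.mem_product, Finset.mem_filter, Fintype.mem_piFinset] at hp
      obtain ⟨⟨hmem, hsm⟩, -⟩ := hp
      rw [Finset.mem_filter, Fintype.mem_piFinset]
      exact ⟨fun i => hmem _, hsm.injective.comp p.2.injective⟩
    · intro r _
      funext x
      simp [Function.comp, Equiv.apply_symm_apply]
    · intro p hp
      rw [Finset.mem_product, Finset.mem_filter, Fintype.mem_piFinset] at hp
      obtain ⟨⟨hmem, hsm⟩, -⟩ := hp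
      have hsort : Tuple.sort (p.1 ∘ p.2) = p.2⁻¹ := by
        symm
        rw [Tuple.eq_sort_iff]
        constructor
        · intro a b hab
          simpa [Function.comp, Equiv.apply_symm_apply] using hsm.monotone hab
        · intro a b hab heq
          exfalso
          have : a = b := by
            apply hsm.injective
            simpa [Function.comp, Equiv.apply_symm_apply] using heq
          omega
      ext x
      · simp [hsort, Function.comp, Equiv.apply_symm_apply]
      · simp [hsort]
    · intro r _
      simp [Function.comp, Equiv.apply_symm_apply]
  rw [h2, Finset.sum_product]
  refine Finset.sum_congr rfl fun ψ hψ => ?_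
  have key : ∀ σ : Equiv.Perm (Fin k),
      Matrix.det (Matrix.of fun i j => B (ψ (σ i)) j)
        = (Equiv.Perm.sign σ : ℤ) * Matrix.det (Matrix.of fun i j => B (ψ i) j) := by
    intro σ
    have := Matrix.det_permute σ (Matrix.of fun i j => B (ψ i) j)
    simpa [Matrix.submatrix] using this
  calc ∑ σ : Equiv.Perm (Fin k), (∏ i, A i (ψ (σ i)))
        * Matrix.det (Matrix.of fun i j => B (ψ (σ i)) j)
      = (∑ σ : Equiv.Perm (Fin k), ((Equiv.Perm.sign σ : ℤ) : R)
          * ∏ i, A i (ψ (σ i))) * Matrix.det (Matrix.of fun i j => B (ψ i) j) := by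
        rw [Finset.sum_mul]
        refine Finset.sum_congr rfl fun σ _ => ?_
        rw [key σ]
        ring
    _ = Matrix.det (Matrix.of fun i j => A j (ψ i))
          * Matrix.det (Matrix.of fun i j => B (ψ i) j) := by
        congr 1
        rw [Matrix.det_apply']
        refine Finset.sum_congr rfl fun σ _ => ?_
        simp [Matrix.of_apply]
    _ = Matrix.det (Matrix.of fun i j => A i (ψ j))
          * Matrix.det (Matrix.of fun i j => B (ψ i) j) := by
        congr 1
        rw [← Matrix.det_transpose]
        congr 1


variable {R : Type*} [CommRing R]

theorem outputMatrix_succ_eq_sum {Q : ℕ → ℕ → R} {n kk : ℕ} {s : Finset ℕ}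
    (hs : ∀ j, outputMatrix Q n j * Q j kk ≠ 0 → j ∈ s) :
    outputMatrix Q (n + 1) kk = ∑ j ∈ s, outputMatrix Q n j * Q j kk := by
  show (∑ᶠ j : ℕ, outputMatrix Q n j * Q j kk) = _
  exact finsum_eq_finset_sum_of_support_subset _ (fun j hj => hs j hj)

theorem support_outputMatrix {P : ℕ → ℕ → R} (hP : RowFinite P) (n : ℕ) :
    (Function.support (outputMatrix P n)).Finite := by
  induction n with
  | zero =>
    apply Set.Finite.subset (Set.finite_singleton 0)
    intro k hk
    rw [Function.mem_support] at hk
    by_contra h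
    simp only [Set.mem_singleton_iff] at h
    exact hk (by simp [outputMatrix, h])
  | succ n ih =>
    apply Set.Finite.subset (Set.Finite.biUnion ih (fun j _ => hP j))
    intro k hk
    rw [Function.mem_support] at hk
    have : ∃ j, outputMatrix P n j * P j k ≠ 0 := by
      by_contra hno
      push_neg at hno
      exact hk (by simpa [outputMatrix] using finsum_eq_zero_of_forall_eq_zero hno)
    obtain ⟨j, hj⟩ := this
    exact Set.mem_biUnion
      (Function.mem_support.2 (fun h0 => hj (by rw [h0, zero_mul])))
      (fun h0 => hj (by rw [h0, mul_zero]))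

theorem hankel_factor {P : ℕ → ℕ → R} (hP : RowFinite P) (n n' : ℕ) :
    outputMatrix P (n + n') 0
      = ∑ᶠ k : ℕ, outputMatrix P n k * outputMatrix (fun i j => P j i) n' k := by
  induction n' generalizing n with
  | zero =>
    rw [Nat.add_zero, finsum_eq_single _ 0 (fun k hk => by simp [outputMatrix, hk])]
    simp [outputMatrix]
  | succ n' ih =>
    have harr : n + (n' + 1) = (n + 1) + n' := by omega
    rw [harr, ih (n + 1)]
    set O' := outputMatrix (fun i j => P j i) with hO'
    set S1 := (support_outputMatrix hP n).toFinset
    set S2 := (support_outputMatrix hP (n + 1)).toFinset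
    set S3 := S1.biUnion (fun j => (hP j).toFinset)
    set s := S1 ∪ S2 ∪ S3 with hsdef
    have hS1 : ∀ j, outputMatrix P n j ≠ 0 → j ∈ s := fun j hj => by
      simp only [hsdef, Finset.mem_union]
      exact Or.inl (Or.inl (by simp [S1, hj]))
    have hS2 : ∀ j, outputMatrix P (n + 1) j ≠ 0 → j ∈ s := fun j hj => by
      simp only [hsdef, Finset.mem_union]
      exact Or.inl (Or.inr (by simp [S2, hj]))
    have hS3 : ∀ j x, outputMatrix P n j ≠ 0 → P j x ≠ 0 → x ∈ s := fun j x hj hx => by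
      simp only [hsdef, Finset.mem_union]
      refine Or.inr (Finset.mem_biUnion.2 ⟨j, by simp [S1, hj], by simp [hx]⟩)
    have hL : (∑ᶠ k : ℕ, outputMatrix P (n + 1) k * O' n' k)
        = ∑ k ∈ s, outputMatrix P (n + 1) k * O' n' k := by
      apply finsum_eq_finset_sum_of_support_subset
      intro k hk
      rw [Function.mem_support] at hk
      exact hS2 k (fun h0 => hk (by rw [h0, zero_mul]))
    have hR : (∑ᶠ k : ℕ, outputMatrix P n k * O' (n' + 1) k)
        = ∑ k ∈ s, outputMatrix P n k * O' (n' + 1) k := by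
      apply finsum_eq_finset_sum_of_support_subset
      intro k hk
      rw [Function.mem_support] at hk
      exact hS1 k (fun h0 => hk (by rw [h0, zero_mul]))
    rw [hL, hR]
    have hOsucc : ∀ k, outputMatrix P (n + 1) k = ∑ j ∈ s, outputMatrix P n j * P j k := by
      intro k
      apply outputMatrix_succ_eq_sum
      intro j hj
      exact hS1 j (fun h0 => hj (by rw [h0, zero_mul]))
    calc ∑ k ∈ s, outputMatrix P (n + 1) k * O' n' k
        = ∑ k ∈ s, ∑ j ∈ s, outputMatrix P n j * P j k * O' n' k := by
          refine Finset.sum_congr rfl fun k _ => ?_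
          rw [hOsucc k, Finset.sum_mul]
      _ = ∑ j ∈ s, ∑ k ∈ s, outputMatrix P n j * P j k * O' n' k := Finset.sum_comm
      _ = ∑ j ∈ s, outputMatrix P n j * O' (n' + 1) j := by
          refine Finset.sum_congr rfl fun j hj => ?_
          by_cases h0 : outputMatrix P n j = 0
          · rw [h0, zero_mul]
            exact Finset.sum_eq_zero fun k _ => by rw [zero_mul, zero_mul]
          · have hOj : O' (n' + 1) j = ∑ k ∈ s, O' n' k * P j k := by
              rw [hO']
              apply outputMatrix_succ_eq_sum
              intro x hx
              exact hS3 j x h0 (fun hz => hx (by rw [hz, mul_zero]))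
            rw [hOj, Finset.mul_sum]
            exact Finset.sum_congr rfl fun k _ => by ring


theorem tpO {R : Type*} [CommRing R] [PartialOrder R] [IsOrderedRing R] (Q : ℕ → ℕ → R)
    (hfin : ∀ n kk, (Function.support fun j => outputMatrix Q n j * Q j kk).Finite)
    (r : ℕ)
    (hTP : ∀ k ≤ r, ∀ f g : Fin k → ℕ, StrictMono f → StrictMono g →
      0 ≤ submatrixDet Q f g) :
    ∀ N k, k ≤ r → ∀ f g : Fin k → ℕ, StrictMono f → StrictMono g →
      k + ∑ i, f i ≤ N → 0 ≤ submatrixDet (outputMatrix Q) f g := by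
  intro N
  induction N with
  | zero =>
    intro k hk f g hf hg hN
    have hk0 : k = 0 := by omega
    subst hk0
    simp [submatrixDet, Matrix.det_fin_zero]
  | succ N ihN =>
    intro k hk f g hf hg hN
    match k, hk, f, g, hf, hg, hN with
    | 0, hk, f, g, hf, hg, hN => simp [submatrixDet, Matrix.det_fin_zero]
    | k' + 1, hk, f, g, hf, hg, hN =>
    by_cases hf0 : f 0 = 0
    · by_cases hg0 : g 0 = 0
      · -- expand along first row
        have hrow : ∀ j : Fin (k' + 1),
            outputMatrix Q (f 0) (g j) = if j = 0 then 1 else 0 := by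
          intro j
          rw [hf0]
          by_cases hj : j = 0
          · simp [hj, outputMatrix, hg0]
          · have : g 0 < g j := hg (by exact Fin.pos_of_ne_zero hj)
            have hgj : g j ≠ 0 := by omega
            simp [outputMatrix, hgj, hj]
        rw [submatrixDet, Matrix.det_succ_row_zero]
        rw [Finset.sum_eq_single 0]
        · simp only [Matrix.of_apply, hrow 0, if_pos rfl, Fin.val_zero, pow_zero, one_mul,
            mul_one]
          have : (Matrix.of fun i j => outputMatrix Q (f i) (g j)).submatrix
              Fin.succ (Fin.succAbove 0)
              = Matrix.of fun i j => outputMatrix Q (f (Fin.succ i)) (g (Fin.succ j)) := by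
            funext i j
            simp [Matrix.submatrix, Fin.succAbove_zero]
          rw [this]
          have hih := ihN k' (by omega) (f ∘ Fin.succ) (g ∘ Fin.succ)
            (hf.comp Fin.strictMono_succ) (hg.comp Fin.strictMono_succ) ?_
          · simpa [submatrixDet, Function.comp] using hih
          · have hsum : ∑ i : Fin (k' + 1), f i = f 0 + ∑ i : Fin k', f (Fin.succ i) :=
              Fin.sum_univ_succ f
            simp only [Function.comp]
            omega
        · intro j _ hj
          simp [hrow j, hj]
        · intro h
          exact absurd (Finset.mem_univ 0) h
      · -- first row of the minor is zero
        have : submatrixDet (outputMatrix Q) f g = 0 := by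
          apply Matrix.det_eq_zero_of_row_eq_zero 0
          intro j
          have hle : g 0 ≤ g j := hg.monotone (Fin.zero_le j)
          have : g j ≠ 0 := by omega
          simp [hf0, outputMatrix, this]
        rw [this]
    · -- all rows ≥ 1 : use Cauchy-Binet
      classical
      have hge : ∀ i, 1 ≤ f i := by
        intro i
        have := hf.monotone (Fin.zero_le i)
        omega
      set f' : Fin (k' + 1) → ℕ := fun i => f i - 1 with hf'
      have hfeq : ∀ i, f i = f' i + 1 := fun i => by
        have := hge i; simp [hf']; omega
      have hf'sm : StrictMono f' := by
        intro a b hab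
        have h1 := hf hab
        have h2 := hge a
        have h3 := hge b
        simp [hf']
        omega
      set s : Finset ℕ := Finset.univ.biUnion
        (fun p : Fin (k' + 1) × Fin (k' + 1) => (hfin (f' p.1) (g p.2)).toFinset) with hs
      have hentry : ∀ i j : Fin (k' + 1), outputMatrix Q (f i) (g j)
          = ∑ x ∈ s, outputMatrix Q (f' i) x * Q x (g j) := by
        intro i j
        rw [hfeq i]
        apply outputMatrix_succ_eq_sum
        intro x hx
        rw [hs]
        exact Finset.mem_biUnion.2 ⟨(i, j), Finset.mem_univ _, by simp [hx]⟩
      have hdet : submatrixDet (outputMatrix Q) f g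
          = Matrix.det (Matrix.of fun i j => ∑ x ∈ s,
              outputMatrix Q (f' i) x * Q x (g j)) := by
        rw [submatrixDet]
        congr 1
        funext i j
        simp [hentry i j]
      rw [hdet, cauchyBinet]
      apply Finset.sum_nonneg
      intro ψ hψ
      rw [Finset.mem_filter] at hψ
      have hψsm : StrictMono ψ := hψ.2
      apply mul_nonneg
      · have := ihN (k' + 1) hk f' ψ hf'sm hψsm ?_
        · exact this
        · have hsum : ∑ i : Fin (k' + 1), f i = (∑ i : Fin (k' + 1), f' i) + (k' + 1) := by
            rw [Finset.sum_congr rfl (fun i _ => hfeq i), Finset.sum_add_distrib]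
            simp
          omega
      · exact hTP (k' + 1) hk ψ g hψsm hg


end Aux


/-- With `a_n = (P^n)_{00}`, the Hankel matrix `H = (a_{i+j})` factorizes as
`H = 𝒪(P)·𝒪(Pᵀ)ᵀ` (entrywise: `a_{n+n'} = Σ_k 𝒪(P)_{nk}·𝒪(Pᵀ)_{n'k}`).
Consequently, if `P` is totally positive of order `r` over a partially ordered
commutative ring, then so is `H`. -/

theorem stmt_17 :
    (∀ (R : Type) [CommRing R] (P : ℕ → ℕ → R), RowFinite P →
      ∀ n n' : ℕ, outputMatrix P (n + n') 0
        = ∑ᶠ k : ℕ, outputMatrix P n k * outputMatrix (fun i j => P j i) n' k)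
    ∧ (∀ (R : Type) [CommRing R] [PartialOrder R] [IsOrderedRing R] (P : ℕ → ℕ → R), RowFinite P → ∀ r : ℕ,
        (∀ k ≤ r, ∀ f g : Fin k → ℕ, StrictMono f → StrictMono g →
          0 ≤ submatrixDet P f g) →
        ∀ k ≤ r, ∀ f g : Fin k → ℕ, StrictMono f → StrictMono g →
          0 ≤ submatrixDet (fun i j => outputMatrix P (i + j) 0) f g) := by
  constructor
  · intro R _ P hP n n'
    exact hankel_factor hP n n'
  · intro R _ _ _ P hP r hTP k hk f g hf hg
    classical
    set O' := outputMatrix (fun i j => P j i) with hO'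
    set s : Finset ℕ := Finset.univ.biUnion
      (fun i : Fin k => (support_outputMatrix hP (f i)).toFinset) with hs
    have hentry : ∀ (i j : Fin k), outputMatrix P (f i + g j) 0
        = ∑ x ∈ s, outputMatrix P (f i) x * O' (g j) x := by
      intro i j
      rw [hankel_factor hP (f i) (g j)]
      apply finsum_eq_finset_sum_of_support_subset
      intro x hx
      rw [Function.mem_support] at hx
      rw [hs]
      refine Finset.mem_biUnion.2 ⟨i, Finset.mem_univ _, ?_⟩
      simp only [Set.Finite.mem_toFinset, Function.mem_support]
      exact fun h0 => hx (by rw [h0, zero_mul])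
    have hdet : submatrixDet (fun i j => outputMatrix P (i + j) 0) f g
        = Matrix.det (Matrix.of fun i j => ∑ x ∈ s,
            outputMatrix P (f i) x * O' (g j) x) := by
      rw [submatrixDet]
      congr 1
      funext i j
      simp [hentry i j]
    rw [hdet, cauchyBinet s (fun i x => outputMatrix P (f i) x) (fun x j => O' (g j) x)]
    apply Finset.sum_nonneg
    intro ψ hψ
    rw [Finset.mem_filter] at hψ
    have hψsm : StrictMono ψ := hψ.2
    apply mul_nonneg
    · have hfin1 : ∀ n kk,
          (Function.support fun j => outputMatrix P n j * P j kk).Finite := by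
        intro n kk
        apply (support_outputMatrix hP n).subset
        intro x hx
        rw [Function.mem_support] at hx ⊢
        exact fun h0 => hx (by rw [h0, zero_mul])
      have := tpO P hfin1 r hTP (k + ∑ i, f i) k hk f ψ hf hψsm le_rfl
      simpa [submatrixDet] using this
    · have hfin2 : ∀ n kk,
          (Function.support fun j => O' n j * (fun i j => P j i) j kk).Finite := by
        intro n kk
        apply (hP kk).subset
        intro x hx
        rw [Function.mem_support] at hx
        simp only [Set.mem_setOf_eq]
        exact fun h0 => hx (by simp [h0])
      have hTP' : ∀ k ≤ r, ∀ f g : Fin k → ℕ, StrictMono f → StrictMono g →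
          0 ≤ submatrixDet (fun i j => P j i) f g := by
        intro k hk f g hf hg
        have h2 : (Matrix.of fun (i j : Fin k) => P (g j) (f i))
            = Matrix.transpose (Matrix.of fun (i j : Fin k) => P (g i) (f j)) := rfl
        rw [submatrixDet]
        show 0 ≤ Matrix.det (Matrix.of fun (i j : Fin k) => P (g j) (f i))
        rw [h2, Matrix.det_transpose]
        simpa [submatrixDet] using hTP k hk g f hg hf
      have := tpO (fun i j => P j i) hfin2 r hTP' (k + ∑ i, g i) k hk g ψ hg hψsm le_rfl
      rw [submatrixDet] at this
      rw [show (Matrix.of fun i j => O' (g j) (ψ i))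
          = Matrix.transpose (Matrix.of fun i j => O' (g i) (ψ j)) from rfl,
        Matrix.det_transpose]
      exact this
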